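/- If two graph sequences 𝒢 and ℋ are coarsely equivalent and 𝒢 is hyperfinite, then ℋ is hyperfinite. In other words, hyperfiniteness is an invariant of coarse equivalence of graph sequences. -/

import Mathlib

open Filter Topology

/-- A graph sequence: finite connected graphs of uniformly bounded degree whose
number of vertices tends to infinity. -/
structure GraphSeq (V : ℕ → Type*) where
  G : ∀ n, SimpleGraph (V n)
  finite : ∀ n, Finite (V n)
  connected : ∀ n, (G n).Connected
  degBound : ℕ
  deg_le : ∀ n, ∀ x : V n, ((G n).neighborSet x).ncard ≤ degBound
  card_tendsto : Tendsto (fun n => Nat.card (V n)) atTop atTop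

/-- The edge number `e(𝒢) = liminf |E(G_n)|/|V(G_n)|`. -/
noncomputable def GraphSeq.edgeNumber {V : ℕ → Type*} (Gs : GraphSeq V) : ℝ :=
  liminf (fun n => (((Gs.G n).edgeSet.ncard : ℝ)) / (Nat.card (V n) : ℝ)) atTop

/-- Bi-Lipschitz equivalence `𝒢 ≃ ℋ` of graph sequences on the same vertex sets. -/
def GraphSeq.equivSeq {V : ℕ → Type*} (Gs Hs : GraphSeq V) : Prop :=
  ∃ L : ℕ, 0 < L ∧ ∀ n, ∀ x y : V n,
    (Hs.G n).dist x y ≤ L * (Gs.G n).dist x y ∧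
    (Gs.G n).dist x y ≤ L * (Hs.G n).dist x y

/-- The (combinatorial) cost `c(𝒢) = inf { e(ℋ) : ℋ ≃ 𝒢 }`. -/
noncomputable def GraphSeq.cost {V : ℕ → Type*} (Gs : GraphSeq V) : ℝ :=
  sInf { x : ℝ | ∃ Hs : GraphSeq V, Gs.equivSeq Hs ∧ x = Hs.edgeNumber }

/-- Coarse equivalence of graph sequences: a uniform `(A,A)`-quasi-isometry levelwise. -/
def coarseEquiv {V W : ℕ → Type*} (Gs : GraphSeq V) (Hs : GraphSeq W) : Prop :=
  ∃ A : ℝ, 0 < A ∧ ∀ n, ∃ f : V n → W n,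
    (∀ x y : V n,
      ((Gs.G n).dist x y : ℝ) / A - A ≤ ((Hs.G n).dist (f x) (f y) : ℝ) ∧
      ((Hs.G n).dist (f x) (f y) : ℝ) ≤ A * ((Gs.G n).dist x y : ℝ) + A) ∧
    (∀ w : W n, ∃ x : V n, ((Hs.G n).dist (f x) w : ℝ) ≤ A)

/-- Hyperfiniteness of a family of graphs. -/
def hyperfiniteFam {V : ℕ → Type*} (G : ∀ n, SimpleGraph (V n)) : Prop :=
  ∀ ε : ℝ, 0 < ε → ∃ K : ℕ, 0 < K ∧ ∃ E : ∀ n, Set (Sym2 (V n)),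
    (∀ n, E n ⊆ (G n).edgeSet) ∧
    limsup (fun n => (((E n).ncard : ℝ)) / (Nat.card (V n) : ℝ)) atTop < ε ∧
    ∀ n, ∀ x : V n, {y | ((G n).deleteEdges (E n)).Reachable x y}.ncard ≤ K

def GraphSeq.hyperfinite {V : ℕ → Type*} (Gs : GraphSeq V) : Prop :=
  hyperfiniteFam Gs.G

/-- Property A for a family of graphs. -/
def propertyAFam {V : ℕ → Type*} (G : ∀ n, SimpleGraph (V n)) : Prop :=
  ∀ ε : ℝ, 0 < ε → ∃ S : ℕ, 0 < S ∧ ∀ n, ∃ ξ : V n → V n → ℝ,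
    (∀ x, ∑ᶠ y, |ξ x y| = 1) ∧
    (∀ x y, ξ x y ≠ 0 → (G n).dist x y ≤ S) ∧
    (∀ x y, (G n).Adj x y → ∑ᶠ z, |ξ x z - ξ y z| < ε)

def GraphSeq.propertyA {V : ℕ → Type*} (Gs : GraphSeq V) : Prop :=
  propertyAFam Gs.G

/-- Property almost-A: one may delete a vanishing proportion of vertices to get property A. -/
def GraphSeq.almostA {V : ℕ → Type*} (Gs : GraphSeq V) : Prop :=
  ∃ V' : ∀ n, Set (V n),
    Tendsto (fun n => (((V' n).ncard : ℝ)) / (Nat.card (V n) : ℝ)) atTop (𝓝 0) ∧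
    propertyAFam (fun n => (Gs.G n).induce ((V' n)ᶜ))

/-- The set of edges of `G` with exactly one endpoint in `F`. -/
def edgeBoundary {V : Type*} (G : SimpleGraph V) (F : Set V) : Set (Sym2 V) :=
  {e | e ∈ G.edgeSet ∧ ∃ x y, e = s(x, y) ∧ x ∈ F ∧ y ∉ F}

/-- The Cayley graph of a group with respect to a set `S`. -/
def cayleyGraph (Γ : Type*) [Group Γ] (S : Set Γ) : SimpleGraph Γ :=
  SimpleGraph.fromRel (fun x y => ∃ s ∈ S, y = x * s)

/-- The simple graph underlying an `S`-labelled graph given by label maps `lab`. -/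
def labGraph {Γ V : Type*} (S : Set Γ) (lab : Γ → V → V) : SimpleGraph V :=
  SimpleGraph.fromRel (fun x y => ∃ s ∈ S, y = lab s x)

/-- Right multiplication by `s` on the right cosets of `H`. -/
def schreierMul {Γ : Type*} [Group Γ] (H : Subgroup Γ) (s : Γ) :
    Quotient (QuotientGroup.rightRel H) → Quotient (QuotientGroup.rightRel H) :=
  Quotient.map (fun g => g * s) (fun a b hab => by
    have h := (QuotientGroup.rightRel_apply).mp hab
    exact (QuotientGroup.rightRel_apply).mpr (by
      simpa [mul_assoc] using h))

/-- The Schreier graph `Sch(Γ, H, S)` on the right cosets of `H`. -/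
def schreierGraph {Γ : Type*} [Group Γ] (H : Subgroup Γ) (S : Set Γ) :
    SimpleGraph (Quotient (QuotientGroup.rightRel H)) :=
  labGraph S (fun s => schreierMul H s)

/-- The rooted labelled `r`-ball of the labelled graph `lab` at `x` is isomorphic to
the `r`-ball around the identity in `Cay(Γ, S)`. -/
def ballIso {Γ : Type*} [Group Γ] (S : Set Γ) {V : Type*} (lab : Γ → V → V)
    (x : V) (r : ℕ) : Prop :=
  ∃ f : Γ → V, f 1 = x ∧
    (∀ g g' : Γ, (cayleyGraph Γ S).dist 1 g ≤ r → (cayleyGraph Γ S).dist 1 g' ≤ r →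
      f g = f g' → g = g') ∧
    (∀ g : Γ, (cayleyGraph Γ S).dist 1 g < r → ∀ s ∈ S, f (g * s) = lab s (f g)) ∧
    (∀ v : V, (labGraph S lab).dist x v ≤ r →
      ∃ g : Γ, (cayleyGraph Γ S).dist 1 g ≤ r ∧ f g = v)

/-- Benjamini–Schramm convergence of the `S`-labelled graphs given by `lab` to `Cay(Γ, S)`. -/
def BSConv {Γ : Type*} [Group Γ] (S : Set Γ) {V : ℕ → Type*}
    (lab : ∀ n, Γ → V n → V n) : Prop :=
  ∀ r : ℕ, Tendsto
    (fun n => ((Nat.card {x : V n // ballIso S (lab n) x r} : ℝ)) / (Nat.card (V n) : ℝ))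
    atTop (𝓝 1)

/-- A sofic approximation of `Γ`: a graph sequence labelled by `S` which
Benjamini–Schramm converges to `Cay(Γ, S)`. -/
def IsSoficApprox {Γ : Type*} [Group Γ] (S : Set Γ) {V : ℕ → Type*} (Gs : GraphSeq V)
    (lab : ∀ n, Γ → V n → V n) : Prop :=
  (∀ n, Gs.G n = labGraph S (lab n)) ∧ BSConv S lab

/-- Amenability via Følner sets with respect to the generating set `S`. -/
def FolnerAmenable {Γ : Type*} [Group Γ] (S : Set Γ) : Prop :=
  ∀ ε : ℝ, 0 < ε → ∃ F : Set Γ, F.Finite ∧ F.Nonempty ∧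
    ∀ g ∈ S, ((symmDiff ((fun x => g * x) '' F) F).ncard : ℝ) < ε * (F.ncard : ℝ)


section MyHelpers
open SimpleGraph


lemma myNcardBiUnion {α β : Type*} [Finite β] {s : Set α} (hs : s.Finite)
    (f : α → Set β) (C : ℕ) : (∀ a ∈ s, (f a).ncard ≤ C) → (⋃ a ∈ s, f a).ncard ≤ s.ncard * C := by
  refine Set.Finite.induction_on (motive := fun s _ => (∀ a ∈ s, (f a).ncard ≤ C) → (⋃ a ∈ s, f a).ncard ≤ s.ncard * C) s hs (by simp) ?_
  intro a t hat ht ih hf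
  rw [Set.biUnion_insert, Set.ncard_insert_of_notMem hat ht]
  calc (f a ∪ ⋃ x ∈ t, f x).ncard ≤ (f a).ncard + (⋃ x ∈ t, f x).ncard := Set.ncard_union_le _ _
    _ ≤ C + t.ncard * C := add_le_add (hf a (Set.mem_insert _ _))
        (ih fun b hb => hf b (Set.mem_insert_of_mem _ hb))
    _ = (t.ncard + 1) * C := by ring

lemma myBallCard {V : Type*} [Finite V] {G : SimpleGraph V} (hc : G.Connected)
    {d : ℕ} (hd : ∀ x, (G.neighborSet x).ncard ≤ d) (x : V) :
    ∀ r : ℕ, {y | G.dist x y ≤ r}.ncard ≤ (d + 1) ^ r := by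
  intro r
  induction r with
  | zero =>
    have h : {y | G.dist x y ≤ 0} = {x} := by
      ext y
      simp only [Set.mem_setOf_eq, Nat.le_zero, hc.dist_eq_zero_iff, Set.mem_singleton_iff]
      exact eq_comm
    rw [h]; simp
  | succ r ih =>
    have hsub : {y | G.dist x y ≤ r + 1} ⊆
        ⋃ z ∈ {y | G.dist x y ≤ r}, insert z (G.neighborSet z) := by
      intro y hy
      simp only [Set.mem_setOf_eq] at hy
      rcases Nat.lt_or_ge (G.dist x y) (r + 1) with h | h
      · exact Set.mem_biUnion (Nat.lt_succ_iff.mp h) (Set.mem_insert _ _)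
      · have hdij : G.dist y x = r + 1 := by rw [G.dist_comm]; omega
        obtain ⟨p, hp⟩ := (hc y x).exists_walk_length_eq_dist
        cases p with
        | nil => rw [hdij] at hp; simp at hp
        | cons ha q =>
          rename_i z
          rw [Walk.length_cons, hdij] at hp
          have hz : G.dist x z ≤ r := by
            have h2 := SimpleGraph.dist_le q.reverse
            rwa [Walk.length_reverse, Nat.succ_injective hp] at h2
          exact Set.mem_biUnion hz (Set.mem_insert_iff.mpr (Or.inr ha.symm))
    calc {y | G.dist x y ≤ r + 1}.ncard
        ≤ (⋃ z ∈ {y | G.dist x y ≤ r}, insert z (G.neighborSet z)).ncard :=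
          Set.ncard_le_ncard hsub (Set.toFinite _)
      _ ≤ {y | G.dist x y ≤ r}.ncard * (d + 1) :=
          myNcardBiUnion (Set.toFinite _) _ _ (fun z _ =>
            le_trans (Set.ncard_insert_le _ _) (by have := hd z; omega))
      _ ≤ (d + 1) ^ r * (d + 1) := Nat.mul_le_mul_right _ ih
      _ = (d + 1) ^ (r + 1) := (pow_succ _ _).symm

lemma myIncident {V : Type*} [Finite V] {G : SimpleGraph V}
    {d : ℕ} (hd : ∀ x, (G.neighborSet x).ncard ≤ d) (w : V) :
    {e | e ∈ G.edgeSet ∧ w ∈ e}.ncard ≤ d := by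
  have hsub : {e | e ∈ G.edgeSet ∧ w ∈ e} ⊆ (fun v => s(w, v)) '' (G.neighborSet w) := by
    rintro e ⟨he, hw⟩
    obtain ⟨b, rfl⟩ := Sym2.mem_iff_exists.mp hw
    exact ⟨b, G.mem_edgeSet.mp he, rfl⟩
  calc {e | e ∈ G.edgeSet ∧ w ∈ e}.ncard
      ≤ ((fun v => s(w, v)) '' (G.neighborSet w)).ncard := Set.ncard_le_ncard hsub (Set.toFinite _)
    _ ≤ (G.neighborSet w).ncard := Set.ncard_image_le (Set.toFinite _)
    _ ≤ d := hd w

lemma sym2_rep {α : Type*} (e : Sym2 α) : ∃ a b, e = s(a, b) := by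
  induction e using Sym2.ind with | _ a b => exact ⟨a, b, rfl⟩

lemma cardVW_le {V W : Type} [Finite V] [Finite W] (G : SimpleGraph V) (hGc : G.Connected)
    {dG : ℕ} (hdG : ∀ x, (G.neighborSet x).ncard ≤ dG) {A : ℝ} (hA : 0 < A)
    (H : SimpleGraph W) (f : V → W)
    (hQI : ∀ x y : V, (G.dist x y : ℝ) / A - A ≤ (H.dist (f x) (f y) : ℝ)) :
    Nat.card V ≤ Nat.card W * (dG + 1) ^ ⌈A * A⌉₊ := by
  classical
  have hu : (Set.univ : Set V) ⊆ ⋃ w ∈ (Set.univ : Set W), {x : V | f x = w} :=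
    fun x _ => Set.mem_biUnion (Set.mem_univ (f x)) rfl
  have hfib : ∀ w ∈ (Set.univ : Set W), {x : V | f x = w}.ncard ≤ (dG + 1) ^ ⌈A * A⌉₊ := by
    intro w _
    rcases Set.eq_empty_or_nonempty {x : V | f x = w} with he | ⟨x0, hx0⟩
    · rw [he]; simp
    · have hx0' : f x0 = w := hx0
      have hsub : {x : V | f x = w} ⊆ {y | G.dist x0 y ≤ ⌈A * A⌉₊} := by
        intro xx hxx
        have hxx' : f xx = w := hxx
        have hl := hQI x0 xx
        have hz : H.dist (f x0) (f xx) = 0 := by rw [hx0', hxx']; exact SimpleGraph.dist_self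
        rw [hz] at hl
        have hl' : (G.dist x0 xx : ℝ) / A - A ≤ 0 := by exact_mod_cast hl
        have h2 : (G.dist x0 xx : ℝ) ≤ A * A := by
          rw [sub_nonpos] at hl'
          calc (G.dist x0 xx : ℝ) = (G.dist x0 xx : ℝ) / A * A := by field_simp
            _ ≤ A * A := mul_le_mul_of_nonneg_right hl' hA.le
        have h3 : (G.dist x0 xx : ℝ) ≤ (⌈A * A⌉₊ : ℝ) := h2.trans (Nat.le_ceil _)
        exact_mod_cast h3
      exact le_trans (Set.ncard_le_ncard hsub (Set.toFinite _)) (myBallCard hGc hdG x0 _)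
  calc Nat.card V = (Set.univ : Set V).ncard := by rw [Set.ncard_univ]
    _ ≤ (⋃ w ∈ (Set.univ : Set W), {x : V | f x = w}).ncard :=
        Set.ncard_le_ncard hu (Set.toFinite _)
    _ ≤ (Set.univ : Set W).ncard * (dG + 1) ^ ⌈A * A⌉₊ :=
        myNcardBiUnion (Set.toFinite _) _ _ hfib
    _ = Nat.card W * (dG + 1) ^ ⌈A * A⌉₊ := by rw [Set.ncard_univ]


lemma myEdgeCount {V : Type*} [Finite V] {G : SimpleGraph V}
    {d : ℕ} (hd : ∀ x, (G.neighborSet x).ncard ≤ d) : G.edgeSet.ncard ≤ Nat.card V * d := by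
  classical
  have hsub : G.edgeSet ⊆ ⋃ x ∈ (Set.univ : Set V), {e | e ∈ G.edgeSet ∧ x ∈ e} := by
    intro e he
    obtain ⟨a, b, rfl⟩ := sym2_rep e
    exact Set.mem_biUnion (Set.mem_univ a) ⟨he, Sym2.mem_mk_left _ _⟩
  calc G.edgeSet.ncard ≤ (⋃ x ∈ (Set.univ : Set V), {e | e ∈ G.edgeSet ∧ x ∈ e}).ncard :=
        Set.ncard_le_ncard hsub (Set.toFinite _)
    _ ≤ (Set.univ : Set V).ncard * d := myNcardBiUnion (Set.toFinite _) _ _ (fun x _ => myIncident hd x)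
    _ = Nat.card V * d := by rw [Set.ncard_univ]

lemma perLevel {V W : Type} [Finite V] [Finite W]
    (G : SimpleGraph V) (H : SimpleGraph W) (hGc : G.Connected) (hHc : H.Connected)
    {dG dH : ℕ} (hdG : ∀ x, (G.neighborSet x).ncard ≤ dG) (hdH : ∀ x, (H.neighborSet x).ncard ≤ dH)
    {A : ℝ} (hA : 0 < A) (f : V → W)
    (hQI : ∀ x y : V, (G.dist x y : ℝ) / A - A ≤ (H.dist (f x) (f y) : ℝ))
    (x : W → V) (hx : ∀ w, (H.dist (f (x w)) w : ℝ) ≤ A)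
    (E : Set (Sym2 V)) {K : ℕ} (hcomp : ∀ v, {y | (G.deleteEdges E).Reachable v y}.ncard ≤ K) :
    ∃ F : Set (Sym2 W), F ⊆ H.edgeSet ∧
      F.ncard ≤ E.ncard * (2 * (dG + 1) ^ ⌈A * (3 * A + 1)⌉₊ * (dH + 1) ^ ⌈A⌉₊ * dH) ∧
      ∀ w, {w' | (H.deleteEdges F).Reachable w w'}.ncard ≤ K * (dH + 1) ^ ⌈A⌉₊ := by
  classical
  have fiber_bound : ∀ v : V, {w : W | x w = v}.ncard ≤ (dH + 1) ^ ⌈A⌉₊ := by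
    intro v
    have hs : {w : W | x w = v} ⊆ {w | H.dist (f v) w ≤ ⌈A⌉₊} := by
      intro w hw
      have hw' : x w = v := hw
      have h1 := hx w
      rw [hw'] at h1
      have h2 : (H.dist (f v) w : ℝ) ≤ (⌈A⌉₊ : ℝ) := h1.trans (Nat.le_ceil A)
      exact_mod_cast h2
    exact le_trans (Set.ncard_le_ncard hs (Set.toFinite _)) (myBallCard hHc hdH (f v) _)
  have hcount : {e | e ∈ H.edgeSet ∧ ∃ w w', e = s(w, w') ∧
        ¬(G.deleteEdges E).Reachable (x w) (x w')}.ncard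
      ≤ E.ncard * (2 * (dG + 1) ^ ⌈A * (3 * A + 1)⌉₊ * (dH + 1) ^ ⌈A⌉₊ * dH) := by
    have hcsub : {e | e ∈ H.edgeSet ∧ ∃ w w', e = s(w, w') ∧
          ¬(G.deleteEdges E).Reachable (x w) (x w')}
        ⊆ ⋃ e' ∈ E, {e | e ∈ H.edgeSet ∧ ∃ w ∈ e, ∃ a ∈ e',
            G.dist a (x w) ≤ ⌈A * (3 * A + 1)⌉₊} := by
      rintro e ⟨heE, w, w', rfl, hnr⟩
      have hadj : H.Adj w w' := H.mem_edgeSet.mp heE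
      have hd1 : H.dist w w' ≤ 1 := by
        have h1 := SimpleGraph.dist_le (Walk.cons hadj Walk.nil)
        simpa using h1
      have htri : (H.dist (f (x w)) (f (x w')) : ℝ) ≤ 2 * A + 1 := by
        have t1 := hHc.dist_triangle (u := f (x w)) (v := w) (w := f (x w'))
        have t2 := hHc.dist_triangle (u := w) (v := w') (w := f (x w'))
        have e1 := hx w
        have e2 : (H.dist w' (f (x w')) : ℝ) ≤ A := by rw [SimpleGraph.dist_comm]; exact hx w'
        have hd1' : (H.dist w w' : ℝ) ≤ 1 := by exact_mod_cast hd1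
        have tc1 : (H.dist (f (x w)) (f (x w')) : ℝ)
            ≤ (H.dist (f (x w)) w : ℝ) + (H.dist w (f (x w')) : ℝ) := by exact_mod_cast t1
        have tc2 : (H.dist w (f (x w')) : ℝ)
            ≤ (H.dist w w' : ℝ) + (H.dist w' (f (x w')) : ℝ) := by exact_mod_cast t2
        linarith
      have hdgR : G.dist (x w) (x w') ≤ ⌈A * (3 * A + 1)⌉₊ := by
        have hlow := hQI (x w) (x w')
        have h2 : (G.dist (x w) (x w') : ℝ) ≤ A * (3 * A + 1) := by
          have h1 : (G.dist (x w) (x w') : ℝ) / A ≤ 3 * A + 1 := by linarith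
          calc (G.dist (x w) (x w') : ℝ) = (G.dist (x w) (x w') : ℝ) / A * A := by field_simp
            _ ≤ (3 * A + 1) * A := mul_le_mul_of_nonneg_right h1 hA.le
            _ = A * (3 * A + 1) := by ring
        have h3 : (G.dist (x w) (x w') : ℝ) ≤ (⌈A * (3 * A + 1)⌉₊ : ℝ) :=
          h2.trans (Nat.le_ceil _)
        exact_mod_cast h3
      obtain ⟨p, hp⟩ := (hGc (x w) (x w')).exists_walk_length_eq_dist
      have hex : ∃ e' ∈ p.edges, e' ∈ E := by
        by_contra hcon
        push_neg at hcon
        exact hnr ⟨p.toDeleteEdges E hcon⟩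
      obtain ⟨e', hpe, heE'⟩ := hex
      obtain ⟨a, b, rfl⟩ := sym2_rep e'
      have hasup : a ∈ p.support := p.fst_mem_support_of_mem_edges hpe
      have hda : G.dist a (x w) ≤ ⌈A * (3 * A + 1)⌉₊ := by
        rw [SimpleGraph.dist_comm]
        have h1 : G.dist (x w) a ≤ p.length :=
          le_trans (SimpleGraph.dist_le (p.takeUntil a hasup)) (Walk.length_takeUntil_le p hasup)
        rw [hp] at h1
        exact h1.trans hdgR
      exact Set.mem_biUnion heE' ⟨heE, w, Sym2.mem_mk_left _ _, a, Sym2.mem_mk_left _ _, hda⟩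
    have hTbound : ∀ e' ∈ E, {e | e ∈ H.edgeSet ∧ ∃ w ∈ e, ∃ a ∈ e',
          G.dist a (x w) ≤ ⌈A * (3 * A + 1)⌉₊}.ncard
        ≤ 2 * (dG + 1) ^ ⌈A * (3 * A + 1)⌉₊ * (dH + 1) ^ ⌈A⌉₊ * dH := by
      intro e' _
      obtain ⟨a, b, rfl⟩ := sym2_rep e'
      have hSb : ∀ c : V, {w : W | G.dist c (x w) ≤ ⌈A * (3 * A + 1)⌉₊}.ncard
          ≤ (dG + 1) ^ ⌈A * (3 * A + 1)⌉₊ * (dH + 1) ^ ⌈A⌉₊ := by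
        intro c
        have hsub2 : {w : W | G.dist c (x w) ≤ ⌈A * (3 * A + 1)⌉₊}
            ⊆ ⋃ v ∈ {y : V | G.dist c y ≤ ⌈A * (3 * A + 1)⌉₊}, {w : W | x w = v} :=
          fun w hw => Set.mem_biUnion hw rfl
        calc {w : W | G.dist c (x w) ≤ ⌈A * (3 * A + 1)⌉₊}.ncard
            ≤ (⋃ v ∈ {y : V | G.dist c y ≤ ⌈A * (3 * A + 1)⌉₊}, {w : W | x w = v}).ncard :=
              Set.ncard_le_ncard hsub2 (Set.toFinite _)
          _ ≤ {y : V | G.dist c y ≤ ⌈A * (3 * A + 1)⌉₊}.ncard * (dH + 1) ^ ⌈A⌉₊ :=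
              myNcardBiUnion (Set.toFinite _) _ _ (fun v _ => fiber_bound v)
          _ ≤ (dG + 1) ^ ⌈A * (3 * A + 1)⌉₊ * (dH + 1) ^ ⌈A⌉₊ :=
              Nat.mul_le_mul_right _ (myBallCard hGc hdG c _)
      have hTS : {e | e ∈ H.edgeSet ∧ ∃ w ∈ e, ∃ a' ∈ s(a, b),
            G.dist a' (x w) ≤ ⌈A * (3 * A + 1)⌉₊}
          ⊆ ⋃ w ∈ ({w : W | G.dist a (x w) ≤ ⌈A * (3 * A + 1)⌉₊} ∪
              {w : W | G.dist b (x w) ≤ ⌈A * (3 * A + 1)⌉₊}), {e | e ∈ H.edgeSet ∧ w ∈ e} := by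
        rintro e ⟨he, w, hwe, c, hce, hdc⟩
        refine Set.mem_biUnion ?_ ⟨he, hwe⟩
        rcases Sym2.mem_iff.mp hce with rfl | rfl
        · exact Or.inl hdc
        · exact Or.inr hdc
      calc {e | e ∈ H.edgeSet ∧ ∃ w ∈ e, ∃ a' ∈ s(a, b),
            G.dist a' (x w) ≤ ⌈A * (3 * A + 1)⌉₊}.ncard
          ≤ ({w : W | G.dist a (x w) ≤ ⌈A * (3 * A + 1)⌉₊} ∪
              {w : W | G.dist b (x w) ≤ ⌈A * (3 * A + 1)⌉₊}).ncard * dH :=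
            le_trans (Set.ncard_le_ncard hTS (Set.toFinite _))
              (myNcardBiUnion (Set.toFinite _) _ _ (fun w _ => myIncident hdH w))
        _ ≤ ((dG + 1) ^ ⌈A * (3 * A + 1)⌉₊ * (dH + 1) ^ ⌈A⌉₊ +
              (dG + 1) ^ ⌈A * (3 * A + 1)⌉₊ * (dH + 1) ^ ⌈A⌉₊) * dH :=
            Nat.mul_le_mul_right _ (le_trans (Set.ncard_union_le _ _)
              (add_le_add (hSb a) (hSb b)))
        _ = 2 * (dG + 1) ^ ⌈A * (3 * A + 1)⌉₊ * (dH + 1) ^ ⌈A⌉₊ * dH := by ring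
    calc {e | e ∈ H.edgeSet ∧ ∃ w w', e = s(w, w') ∧
          ¬(G.deleteEdges E).Reachable (x w) (x w')}.ncard
        ≤ (⋃ e' ∈ E, {e | e ∈ H.edgeSet ∧ ∃ w ∈ e, ∃ a ∈ e',
            G.dist a (x w) ≤ ⌈A * (3 * A + 1)⌉₊}).ncard :=
          Set.ncard_le_ncard hcsub (Set.toFinite _)
      _ ≤ E.ncard * (2 * (dG + 1) ^ ⌈A * (3 * A + 1)⌉₊ * (dH + 1) ^ ⌈A⌉₊ * dH) :=
          myNcardBiUnion (Set.toFinite _) _ _ hTbound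
  have hcompF : ∀ w : W, {w' | (H.deleteEdges {e | e ∈ H.edgeSet ∧ ∃ w w', e = s(w, w') ∧
        ¬(G.deleteEdges E).Reachable (x w) (x w')}).Reachable w w'}.ncard
      ≤ K * (dH + 1) ^ ⌈A⌉₊ := by
    intro w
    have key : ∀ (w' w'' : W) (_ : (H.deleteEdges {e | e ∈ H.edgeSet ∧ ∃ w w', e = s(w, w') ∧
          ¬(G.deleteEdges E).Reachable (x w) (x w')}).Walk w' w''),
        (G.deleteEdges E).Reachable (x w') (x w'') := by
      intro w' w'' p
      induction p with
      | nil => exact Reachable.refl _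
      | cons ha q ih =>
        rename_i u v z
        have ha' := ha
        rw [SimpleGraph.deleteEdges_adj] at ha'
        obtain ⟨hA1, hA2⟩ := ha'
        by_cases hre : (G.deleteEdges E).Reachable (x u) (x v)
        · exact hre.trans ih
        · exact absurd ⟨H.mem_edgeSet.mpr hA1, u, v, rfl, hre⟩ hA2
    calc {w' | (H.deleteEdges {e | e ∈ H.edgeSet ∧ ∃ w w', e = s(w, w') ∧
          ¬(G.deleteEdges E).Reachable (x w) (x w')}).Reachable w w'}.ncard
        ≤ (⋃ v ∈ {y | (G.deleteEdges E).Reachable (x w) y}, {w' : W | x w' = v}).ncard := by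
          refine Set.ncard_le_ncard ?_ (Set.toFinite _)
          intro w' hw'
          obtain ⟨p⟩ := hw'
          exact Set.mem_biUnion (key w w' p) rfl
      _ ≤ {y | (G.deleteEdges E).Reachable (x w) y}.ncard * (dH + 1) ^ ⌈A⌉₊ :=
          myNcardBiUnion (Set.toFinite _) _ _ (fun v _ => fiber_bound v)
      _ ≤ K * (dH + 1) ^ ⌈A⌉₊ := Nat.mul_le_mul_right _ (hcomp (x w))
  exact ⟨_, fun e he => he.1, hcount, hcompF⟩

lemma finalCalc (u v NV NW : ℕ → ℕ) (c1 c2 c3 : ℕ) (ε : ℝ) (hε : 0 < ε)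
    (hu : ∀ n, u n ≤ v n * c1) (hVW : ∀ n, NV n ≤ NW n * c2)
    (hWV : ∀ n, 0 < NW n → 0 < NV n) (hub : ∀ n, v n ≤ NV n * c3)
    (hlim : limsup (fun n => (v n : ℝ) / (NV n : ℝ)) atTop < ε / (2 * ((c1 : ℝ) * c2 + 1))) :
    limsup (fun n => (u n : ℝ) / (NW n : ℝ)) atTop < ε := by
  have hbd : IsBoundedUnder (· ≥ ·) atTop (fun n => (v n : ℝ) / (NV n : ℝ)) :=
    isBoundedUnder_of ⟨0, fun n => by positivity⟩
  have hbd2 : IsBoundedUnder (· ≤ ·) atTop (fun n => (v n : ℝ) / (NV n : ℝ)) := by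
    refine isBoundedUnder_of ⟨(c3 : ℝ), fun n => ?_⟩
    rcases Nat.eq_zero_or_pos (NV n) with h0 | hpos
    · rw [h0]; simp
    · have hVpos : (0 : ℝ) < NV n := by exact_mod_cast hpos
      rw [div_le_iff₀ hVpos]
      have := hub n
      calc (v n : ℝ) ≤ (NV n : ℝ) * c3 := by exact_mod_cast this
        _ = (c3 : ℝ) * NV n := by ring
  have hev := eventually_lt_of_limsup_lt hlim hbd2
  have hev2 : ∀ᶠ n in atTop, (u n : ℝ) / (NW n : ℝ) ≤ ε / 2 := by
    filter_upwards [hev] with n hn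
    rcases Nat.eq_zero_or_pos (NW n) with h0 | hpos
    · rw [h0]; simp; positivity
    · have hWpos : (0 : ℝ) < NW n := by exact_mod_cast hpos
      have hVpos : (0 : ℝ) < NV n := by exact_mod_cast hWV n hpos
      have hu' : (u n : ℝ) ≤ (v n : ℝ) * c1 := by exact_mod_cast hu n
      have hVW' : (NV n : ℝ) ≤ (NW n : ℝ) * c2 := by exact_mod_cast hVW n
      have hqe : (v n : ℝ) = ((v n : ℝ) / (NV n : ℝ)) * (NV n : ℝ) :=
        (div_mul_cancel₀ _ hVpos.ne').symm
      have hq0 : 0 ≤ (v n : ℝ) / (NV n : ℝ) := by positivity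
      have key : (u n : ℝ) / (NW n : ℝ) ≤ ((c1 : ℝ) * c2) * ((v n : ℝ) / (NV n : ℝ)) := by
        rw [div_le_iff₀ hWpos]
        calc (u n : ℝ) ≤ (v n : ℝ) * c1 := hu'
          _ = ((v n : ℝ) / (NV n : ℝ)) * (NV n : ℝ) * c1 := by rw [← hqe]
          _ ≤ ((v n : ℝ) / (NV n : ℝ)) * ((NW n : ℝ) * c2) * c1 := by
              have h1 := mul_le_mul_of_nonneg_left hVW' hq0
              have h2 := mul_le_mul_of_nonneg_right h1 (Nat.cast_nonneg (α := ℝ) c1)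
              linarith
          _ = (c1 : ℝ) * c2 * ((v n : ℝ) / (NV n : ℝ)) * NW n := by ring
      have hb2 : ((c1 : ℝ) * c2) * ((v n : ℝ) / (NV n : ℝ))
          ≤ ((c1 : ℝ) * c2) * (ε / (2 * ((c1 : ℝ) * c2 + 1))) :=
        mul_le_mul_of_nonneg_left hn.le (by positivity)
      have hb3 : ((c1 : ℝ) * c2) * (ε / (2 * ((c1 : ℝ) * c2 + 1))) ≤ ε / 2 := by
        have h1 : (0 : ℝ) < 2 * ((c1 : ℝ) * c2 + 1) := by positivity
        rw [mul_div_assoc', div_le_div_iff₀ h1 two_pos]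
        have hcc : (0 : ℝ) ≤ (c1 : ℝ) * c2 := by positivity
        nlinarith
      linarith
  have hcob : IsCoboundedUnder (· ≤ ·) atTop (fun n => (u n : ℝ) / (NW n : ℝ)) :=
    isCoboundedUnder_le_of_le atTop (fun n => by positivity)
  exact lt_of_le_of_lt (limsup_le_of_le hcob hev2) (by linarith)

end MyHelpers

/-- Hyperfiniteness is a coarse invariant of graph sequences. -/
theorem stmt4 {V W : ℕ → Type} (Gs : GraphSeq V) (Hs : GraphSeq W)
    (h : coarseEquiv Gs Hs) (hh : Gs.hyperfinite) : Hs.hyperfinite := by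
  classical
  obtain ⟨A, hA, hfex⟩ := h
  choose f hfQI hfsurj using hfex
  choose xw hxw using hfsurj
  intro ε hε
  obtain ⟨K, hK, E', hEsub, hlim, hcomp⟩ := hh (ε / (2 *
      (((2 * (Gs.degBound + 1) ^ ⌈A * (3 * A + 1)⌉₊ * (Hs.degBound + 1) ^ ⌈A⌉₊ *
        Hs.degBound : ℕ) : ℝ) * (((Gs.degBound + 1) ^ ⌈A * A⌉₊ : ℕ) : ℝ) + 1))) (by positivity)
  have hper : ∀ n, ∃ F : Set (Sym2 (W n)), F ⊆ (Hs.G n).edgeSet ∧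
      F.ncard ≤ (E' n).ncard * (2 * (Gs.degBound + 1) ^ ⌈A * (3 * A + 1)⌉₊ *
        (Hs.degBound + 1) ^ ⌈A⌉₊ * Hs.degBound) ∧
      ∀ w, {w' | ((Hs.G n).deleteEdges F).Reachable w w'}.ncard
        ≤ K * (Hs.degBound + 1) ^ ⌈A⌉₊ := by
    intro n
    haveI := Gs.finite n
    haveI := Hs.finite n
    exact perLevel (Gs.G n) (Hs.G n) (Gs.connected n) (Hs.connected n) (Gs.deg_le n)
      (Hs.deg_le n) hA (f n) (fun x y => (hfQI n x y).1) (xw n) (hxw n) (E' n) (hcomp n)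
  choose F hFsub hFcard hFcomp using hper
  refine ⟨K * (Hs.degBound + 1) ^ ⌈A⌉₊, Nat.mul_pos hK (pow_pos (Nat.succ_pos _) _),
    F, hFsub, ?_, hFcomp⟩
  refine finalCalc (fun n => (F n).ncard) (fun n => (E' n).ncard)
    (fun n => Nat.card (V n)) (fun n => Nat.card (W n)) _ _ Gs.degBound ε hε hFcard ?_ ?_ ?_ hlim
  · intro n
    haveI := Gs.finite n
    haveI := Hs.finite n
    exact cardVW_le (Gs.G n) (Gs.connected n) (Gs.deg_le n) hA (Hs.G n) (f n)
      (fun x y => (hfQI n x y).1)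
  · intro n hn
    haveI := Gs.finite n
    haveI := Hs.finite n
    obtain ⟨⟨w⟩, -⟩ := Nat.card_pos_iff.mp hn
    haveI : Nonempty (V n) := ⟨xw n w⟩
    exact Nat.card_pos
  · intro n
    haveI := Gs.finite n
    exact le_trans (Set.ncard_le_ncard (hEsub n) (Set.toFinite _)) (myEdgeCount (Gs.deg_le n))
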